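/- In (ℝ³\{0}, g_F) with radial conformal factor F, the great circle β(s) = (R cos(Fs/R), R sin(Fs/R), 0), F = F(R²), parametrized by g_F-arc length, is a geodesic for all R > 0 if and only if F(t) = λ√t for some constant λ ≠ 0; i.e., circles centered at the origin are geodesics precisely when F(t) = √t (up to a multiplicative constant). -/

import Mathlib

/- The circles β(s) = (R cos(F(R²)s/R), R sin(F(R²)s/R), 0), parametrized by
   g_F-arc length, are geodesics of (ℝ³\{0}, g_F) for all R > 0 iff
   F(t) = λ√t for some λ ≠ 0.  The geodesic ODE is
   xₖ'' + (2xₖF'/F)[Σ_{i≠k}(xᵢ')² − (xₖ')²] − (4F'/F)xₖ'·Σ_{i≠k}xᵢxᵢ' = 0. -/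

noncomputable section

open scoped BigOperators

/-- The circle of radius R in the plane x₃ = 0, parametrized by g_F-arc length. -/
def circ (F : ℝ → ℝ) (R s : ℝ) : Fin 3 → ℝ :=
  ![R * Real.cos (F (R ^ 2) * s / R), R * Real.sin (F (R ^ 2) * s / R), 0]

lemma hd_cos (c a s : ℝ) :
    HasDerivAt (fun s' => c * Real.cos (a * s')) ((-(c * a)) * Real.sin (a * s)) s := by
  have h := ((Real.hasDerivAt_cos (a * s)).comp s ((hasDerivAt_id s).const_mul a)).const_mul c
  exact h.congr_deriv (by ring)

lemma hd_sin (c a s : ℝ) :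
    HasDerivAt (fun s' => c * Real.sin (a * s')) ((c * a) * Real.cos (a * s)) s := by
  have h := ((Real.hasDerivAt_sin (a * s)).comp s ((hasDerivAt_id s).const_mul a)).const_mul c
  exact h.congr_deriv (by ring)

lemma circ0 (F : ℝ → ℝ) (R : ℝ) :
    (fun s' => circ F R s' 0) = fun s' => R * Real.cos (F (R ^ 2) / R * s') := by
  funext s'
  simp only [circ, Matrix.cons_val_zero]
  rw [div_mul_eq_mul_div]

lemma circ1 (F : ℝ → ℝ) (R : ℝ) :
    (fun s' => circ F R s' 1) = fun s' => R * Real.sin (F (R ^ 2) / R * s') := by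
  funext s'
  simp only [circ, Matrix.cons_val_one, Matrix.head_cons, Matrix.cons_val_zero]
  rw [div_mul_eq_mul_div]

lemma circ2 (F : ℝ → ℝ) (R : ℝ) :
    (fun s' => circ F R s' 2) = fun _ => (0:ℝ) := by
  funext s'
  simp [circ]

lemma dcirc0 (F : ℝ → ℝ) (R : ℝ) :
    deriv (fun s' => circ F R s' 0)
      = fun s => (-(R * (F (R ^ 2) / R))) * Real.sin (F (R ^ 2) / R * s) := by
  rw [circ0]; funext s; exact (hd_cos R _ s).deriv

lemma dcirc1 (F : ℝ → ℝ) (R : ℝ) :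
    deriv (fun s' => circ F R s' 1)
      = fun s => (R * (F (R ^ 2) / R)) * Real.cos (F (R ^ 2) / R * s) := by
  rw [circ1]; funext s; exact (hd_sin R _ s).deriv

lemma dcirc2 (F : ℝ → ℝ) (R : ℝ) :
    deriv (fun s' => circ F R s' 2) = fun _ => (0:ℝ) := by
  rw [circ2]; funext s; simp

lemma ddcirc0 (F : ℝ → ℝ) (R s : ℝ) :
    deriv (deriv (fun s' => circ F R s' 0)) s
      = (-(R * (F (R ^ 2) / R)) * (F (R ^ 2) / R)) * Real.cos (F (R ^ 2) / R * s) := by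
  rw [dcirc0]; exact (hd_sin _ _ s).deriv

lemma ddcirc1 (F : ℝ → ℝ) (R s : ℝ) :
    deriv (deriv (fun s' => circ F R s' 1)) s
      = (-(R * (F (R ^ 2) / R) * (F (R ^ 2) / R))) * Real.sin (F (R ^ 2) / R * s) := by
  rw [dcirc1]; exact (hd_cos _ _ s).deriv

lemma ddcirc2 (F : ℝ → ℝ) (R s : ℝ) :
    deriv (deriv (fun s' => circ F R s' 2)) s = 0 := by
  rw [dcirc2]; simp

lemma arg_eq (F : ℝ → ℝ) (R s : ℝ) : F (R ^ 2) * s / R = F (R ^ 2) / R * s := by ring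

lemma sum_sq (F : ℝ → ℝ) (R s : ℝ) : (∑ i, (circ F R s i) ^ 2) = R ^ 2 := by
  simp only [Fin.sum_univ_three, circ, Matrix.cons_val_zero, Matrix.cons_val_one,
    Matrix.head_cons, Matrix.cons_val_two, Matrix.tail_cons]
  have h := Real.sin_sq_add_cos_sq (F (R ^ 2) * s / R)
  linear_combination R ^ 2 * h

lemma sum_d_sq (F : ℝ → ℝ) (R s : ℝ) :
    (∑ i, (deriv (fun s' => circ F R s' i) s) ^ 2) = (R * (F (R ^ 2) / R)) ^ 2 := by
  simp only [Fin.sum_univ_three, dcirc0, dcirc1, dcirc2]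
  have h := Real.sin_sq_add_cos_sq (F (R ^ 2) / R * s)
  linear_combination (R * (F (R ^ 2) / R)) ^ 2 * h

lemma sum_xd (F : ℝ → ℝ) (R s : ℝ) :
    (∑ i, circ F R s i * deriv (fun s' => circ F R s' i) s) = 0 := by
  simp only [Fin.sum_univ_three, dcirc0, dcirc1, dcirc2]
  simp only [circ, Matrix.cons_val_zero, Matrix.cons_val_one, Matrix.head_cons,
    Matrix.cons_val_two, Matrix.tail_cons]
  rw [arg_eq]
  ring

theorem stmt11 (F F' : ℝ → ℝ)
    (hd : ∀ t > (0 : ℝ), HasDerivAt F (F' t) t)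
    (hne : ∀ t > (0 : ℝ), F t ≠ 0) :
    (∀ R > (0 : ℝ), ∀ (s : ℝ) (k : Fin 3),
      deriv (deriv fun s' => circ F R s' k) s
        + (2 * circ F R s k * F' (∑ i, (circ F R s i) ^ 2) / F (∑ i, (circ F R s i) ^ 2)) *
            ((∑ i, (deriv (fun s' => circ F R s' i) s) ^ 2)
              - 2 * (deriv (fun s' => circ F R s' k) s) ^ 2)
        - (4 * F' (∑ i, (circ F R s i) ^ 2) / F (∑ i, (circ F R s i) ^ 2)) *
            deriv (fun s' => circ F R s' k) s *
            ((∑ i, circ F R s i * deriv (fun s' => circ F R s' i) s)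
              - circ F R s k * deriv (fun s' => circ F R s' k) s)
      = 0) ↔
    ∃ l : ℝ, l ≠ 0 ∧ ∀ t > (0 : ℝ), F t = l * Real.sqrt t := by
  constructor
  · intro h
    -- Step 1: 2 t F'(t) = F(t) for all t > 0
    have key : ∀ t > (0:ℝ), 2 * t * F' t = F t := by
      intro t ht
      have hR : 0 < Real.sqrt t := Real.sqrt_pos.mpr ht
      have hRne : Real.sqrt t ≠ 0 := ne_of_gt hR
      have hR2 : Real.sqrt t ^ 2 = t := Real.sq_sqrt ht.le
      have h0 := h (Real.sqrt t) hR 0 0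
      set R := Real.sqrt t with hRdef
      rw [sum_sq, sum_d_sq, sum_xd] at h0
      rw [ddcirc0] at h0
      simp only [dcirc0] at h0
      simp only [circ, Matrix.cons_val_zero] at h0
      rw [hR2] at h0
      simp only [mul_zero, zero_mul, zero_div, Real.cos_zero, Real.sin_zero, mul_one] at h0
      have hFne : F t ≠ 0 := hne t ht
      field_simp at h0
      have h1 : F t ^ 2 * (2 * t * F' t - F t) = 0 := by
        linear_combination h0 - 2 * F' t * F t ^ 2 * hR2
      have h2 : F t ^ 2 ≠ 0 := pow_ne_zero 2 hFne
      have h3 := (mul_eq_zero.mp h1).resolve_left h2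
      linarith
    -- Step 2: F t / sqrt t is constant
    refine ⟨F 1, hne 1 one_pos, ?_⟩
    have hG : ∀ u > (0:ℝ), HasDerivAt (fun x => F x / Real.sqrt x) 0 u := by
      intro u hu
      have hsu : Real.sqrt u ≠ 0 := ne_of_gt (Real.sqrt_pos.mpr hu)
      have hsq : Real.sqrt u ^ 2 = u := Real.sq_sqrt hu.le
      have h1 : HasDerivAt (fun x => F x / Real.sqrt x)
          ((F' u * Real.sqrt u - F u * (1 / (2 * Real.sqrt u))) / (Real.sqrt u) ^ 2) u :=
        (hd u hu).div (Real.hasDerivAt_sqrt (ne_of_gt hu)) hsu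
      convert h1 using 1
      have h2 := key u hu
      field_simp
      linear_combination (Real.sqrt u - (Real.sqrt u + 1)) * h2 + (F u - 2 * F' u - F u) * hsq
    have const : ∀ a b : ℝ, 0 < a → a < b → F b / Real.sqrt b = F a / Real.sqrt a := by
      intro a b ha hab
      have hcont : ContinuousOn (fun x => F x / Real.sqrt x) (Set.Icc a b) := by
        intro x hx
        exact ((hG x (lt_of_lt_of_le ha hx.1)).continuousAt).continuousWithinAt
      obtain ⟨c, -, hc⟩ := exists_hasDerivAt_eq_slope (fun x => F x / Real.sqrt x)
        (fun _ => 0) hab hcont (fun x hx => hG x (ha.trans hx.1))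
      have hba : b - a ≠ 0 := sub_ne_zero.mpr (ne_of_gt hab)
      have := hc.symm
      rw [div_eq_zero_iff] at this
      have h4 := this.resolve_right hba
      linarith [h4]
    intro t ht
    have hst : Real.sqrt t ≠ 0 := ne_of_gt (Real.sqrt_pos.mpr ht)
    have h5 : F t / Real.sqrt t = F 1 / Real.sqrt 1 := by
      rcases lt_trichotomy t 1 with h1 | h1 | h1
      · exact (const t 1 ht h1).symm
      · rw [h1]
      · exact const 1 t one_pos h1
    rw [Real.sqrt_one, div_one] at h5
    field_simp at h5
    linarith [h5]
  · rintro ⟨l, hl, hF⟩ R hR s k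
    have hRne : R ≠ 0 := ne_of_gt hR
    have hR2 : Real.sqrt (R ^ 2) = R := Real.sqrt_sq hR.le
    have hR2pos : (0:ℝ) < R ^ 2 := by positivity
    have hFR : F (R ^ 2) = l * R := by rw [hF _ hR2pos, hR2]
    have hF'R : F' (R ^ 2) = l / (2 * R) := by
      have h1 : HasDerivAt F (l * (1 / (2 * Real.sqrt (R ^ 2)))) (R ^ 2) := by
        have hs := (Real.hasDerivAt_sqrt (ne_of_gt hR2pos)).const_mul l
        apply hs.congr_of_eventuallyEq
        filter_upwards [Ioi_mem_nhds hR2pos] with x hx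
        exact hF x hx
      rw [(hd _ hR2pos).unique h1, hR2]
      ring
    rw [sum_sq, sum_d_sq, sum_xd]
    have hk : k = 0 ∨ k = 1 ∨ k = 2 := by omega
    rcases hk with rfl | rfl | rfl
    · rw [ddcirc0]
      simp only [dcirc0]
      simp only [circ, Matrix.cons_val_zero]
      rw [arg_eq, hFR, hF'R]
      have e : l * R / R = l := by field_simp
      rw [e]
      field_simp
      ring
    · rw [ddcirc1]
      simp only [dcirc1]
      simp only [circ, Matrix.cons_val_one, Matrix.head_cons, Matrix.cons_val_zero]
      rw [arg_eq, hFR, hF'R]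
      have e : l * R / R = l := by field_simp
      rw [e]
      field_simp
      ring
    · rw [ddcirc2]
      simp only [dcirc2]
      simp only [circ, Matrix.cons_val_two, Matrix.tail_cons, Matrix.head_cons]
      ring
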